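/- Let G be a connected simple graph on the finite vertex set V, let L be its Laplacian matrix, and let S ⊆ V be nonempty and proper with the subgraph induced on S connected. Then the diagonal block C_S = (L i j)_{i,j ∈ S} has full rank: rank(C_S) = |S|. -/

import Mathlib

open Matrix

/-- Let `G` be a connected simple graph on a finite vertex set `V` with Laplacian `L`,
and let `S` be a nonempty proper subset of `V` whose induced subgraph is connected.
Then the diagonal block `C_S = (L i j)_{i,j ∈ S}` has full rank `|S|`. -/
theorem lapMatrix_block_full_rank {V : Type*} [Fintype V] [DecidableEq V]
    (G : SimpleGraph V) [DecidableRel G.Adj] (hG : G.Connected)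
    (S : Set V) [DecidablePred (· ∈ S)]
    (hS : S.Nonempty) (hSproper : S ≠ Set.univ)
    (hconn : (G.induce S).Connected) :
    ((G.lapMatrix ℝ).submatrix (Subtype.val : S → V) (Subtype.val : S → V)).rank =
      Fintype.card S := by
  classical
  set L := G.lapMatrix ℝ with hL
  set C := L.submatrix (Subtype.val : S → V) (Subtype.val : S → V) with hCdef
  have hposdef : C.PosDef := by
    rw [Matrix.posDef_iff_dotProduct_mulVec]
    constructor
    · ext i j
      have := congrFun (congrFun (G.isSymm_lapMatrix (R := ℝ)) j.val) i.val
      simpa [C, Matrix.conjTranspose_apply, Matrix.submatrix_apply, L,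
        Matrix.transpose_apply] using this.symm
    · intro x hx
      set y : V → ℝ := fun v => if h : v ∈ S then x ⟨v, h⟩ else 0 with hy
      have hy_zero : ∀ v, v ∉ S → y v = 0 := by
        intro v hv; simp [hy, hv]
      -- reduce sums over V to sums over S
      have hsum : ∀ f : V → ℝ, (∀ v, v ∉ S → f v = 0) →
          ∑ v : V, f v = ∑ v : S, f v.val := by
        intro f hf
        rw [← Finset.sum_subset (Finset.subset_univ S.toFinset)
          (fun v _ hv => hf v (by simpa using hv))]
        exact (Finset.sum_set_coe (f := f) S).symm
      have hmv : ∀ v : S, (L *ᵥ y) v.val = (C *ᵥ x) v := by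
        intro v
        show ∑ j : V, L v.val j * y j = ∑ j : S, C v j * x j
        rw [hsum (fun j => L v.val j * y j) (fun j hj => by simp [hy_zero j hj])]
        refine Finset.sum_congr rfl fun j _ => ?_
        simp [C, Matrix.submatrix_apply, hy]
      have key : star x ⬝ᵥ (C *ᵥ x) = y ⬝ᵥ (L *ᵥ y) := by
        rw [show (y ⬝ᵥ (L *ᵥ y)) = ∑ v : V, y v * (L *ᵥ y) v from rfl,
          hsum (fun v => y v * (L *ᵥ y) v)
            (fun v hv => by simp [hy_zero v hv])]
        simp only [star_trivial]
        refine (Finset.sum_congr rfl fun v _ => ?_).symm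
        rw [hmv v]
        simp [hy]
      rw [key]
      have hnonneg : 0 ≤ y ⬝ᵥ (L *ᵥ y) := by
        simpa using (SimpleGraph.posSemidef_lapMatrix ℝ G).dotProduct_mulVec_nonneg y
      rcases hnonneg.lt_or_eq with h | h
      · exact h
      · exfalso
        have h0 : Matrix.toLinearMap₂' ℝ (G.lapMatrix ℝ) y y = 0 := by
          rw [Matrix.toLinearMap₂'_apply']
          exact h.symm
        rw [SimpleGraph.lapMatrix_toLinearMap₂'_apply'_eq_zero_iff_forall_reachable] at h0
        obtain ⟨w, hw⟩ : ∃ w, w ∉ S := by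
          by_contra hwv
          push_neg at hwv
          exact hSproper (Set.eq_univ_iff_forall.mpr hwv)
        apply hx
        funext v
        have := h0 v.val w (hG.preconnected v.val w)
        have : y v.val = 0 := by rw [this, hy_zero w hw]
        simpa [hy] using this
  exact Matrix.rank_of_isUnit C hposdef.isUnit
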